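/- Let C > 0. Let 𝒮_C := {γ : 𝒰 → [0,∞) : Σ_{v ∈ 𝒰} C^{2|v|} γ_v < ∞}, let T↑ be defined on 𝒮_C by (T↑ γ)_u := Σ_{v ∈ 𝒰, u ⊆ v} C^{2|v|} γ_v, let ℳ be the set of completely monotone weights, let T↓ be defined on ℳ by (T↓ γ)_u := C^{−2|u|} lim_{s → ∞} (Δ_{[s] ∖ u} γ)_u, and let 𝒜 := {γ ∈ ℳ : for every u ∈ 𝒰, lim_{r → ∞} lim_{s → ∞} (Δ_{[s] ∖ [r]} γ)_u = γ_u}. Then T↑ maps 𝒮_C bijectively onto 𝒜 and its inverse is the restriction of T↓ to 𝒜; moreover T↓(ℳ) = 𝒮_C, and for every γ ∈ ℳ one has T↑(T↓ γ) ≤ γ pointwise, with equality if and only if γ ∈ 𝒜. -/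

import Mathlib

open Finset Filter Topology

/-- The difference operator `Δ_v` on families indexed by finite subsets of `ℕ`:
`(Δ_v γ)_u := Σ_{w ⊆ v} (−1)^{|w|} γ_{u ∪ w}`. -/
noncomputable def Δ (v : Finset ℕ) (γ : Finset ℕ → ℝ) (u : Finset ℕ) : ℝ :=
  ∑ w ∈ v.powerset, (-1 : ℝ) ^ w.card * γ (u ∪ w)

/-- Completely monotone weights: all iterated differences are non-negative.
(Since `Δ_∅ γ = γ`, this includes non-negativity of `γ` itself.) -/
def CM (γ : Finset ℕ → ℝ) : Prop := ∀ v u : Finset ℕ, 0 ≤ Δ v γ u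

/-- The class `𝒮_C` of weights with `Σ_v C^{2|v|} γ_v < ∞`. -/
def SC (C : ℝ) (γ : Finset ℕ → ℝ) : Prop :=
  (∀ u, 0 ≤ γ u) ∧ Summable fun v : Finset ℕ => C ^ (2 * v.card) * γ v

/-- The class `𝒜` of completely monotone weights with
`lim_r lim_s (Δ_{[s] ∖ [r]} γ)_u = γ_u` for every `u`. -/
def Acond (γ : Finset ℕ → ℝ) : Prop :=
  CM γ ∧ ∀ u : Finset ℕ, ∃ g : ℕ → ℝ,
    (∀ r : ℕ, Filter.Tendsto (fun s : ℕ => Δ (Finset.range s \ Finset.range r) γ u)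
      Filter.atTop (nhds (g r))) ∧
    Filter.Tendsto g Filter.atTop (nhds (γ u))

/-! ### Auxiliary combinatorial lemmas -/

lemma Delta_empty (γ : Finset ℕ → ℝ) (u : Finset ℕ) : Δ ∅ γ u = γ u := by
  simp [Δ]

lemma Delta_insert (γ : Finset ℕ → ℝ) {n : ℕ} {v : Finset ℕ} (hn : n ∉ v) (u : Finset ℕ) :
    Δ (insert n v) γ u = Δ v γ u - Δ v γ (u ∪ {n}) := by
  unfold Δ
  rw [Finset.sum_powerset_insert hn]
  have h1 : ∀ w ∈ v.powerset, (-1:ℝ)^(insert n w).card * γ (u ∪ insert n w)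
      = -((-1:ℝ)^w.card * γ ((u ∪ {n}) ∪ w)) := by
    intro w hw
    rw [Finset.mem_powerset] at hw
    have hnw : n ∉ w := fun h => hn (hw h)
    rw [Finset.card_insert_of_notMem hnw]
    have h2 : u ∪ insert n w = (u ∪ {n}) ∪ w := by
      ext x; simp [Finset.mem_insert, Finset.mem_union, or_comm, or_assoc, or_left_comm]
    rw [h2, pow_succ]
    ring
  rw [Finset.sum_congr rfl h1]
  simp [sub_eq_add_neg]

lemma Delta_eq_zero (γ : Finset ℕ → ℝ) {n : ℕ} {v u : Finset ℕ} (hnv : n ∈ v) (hnu : n ∈ u) :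
    Δ v γ u = 0 := by
  have h : v = insert n (v.erase n) := (Finset.insert_erase hnv).symm
  rw [h, Delta_insert γ (Finset.notMem_erase n v) u]
  have h2 : u ∪ {n} = u := by
    apply Finset.union_eq_left.mpr; simpa using hnu
  rw [h2, sub_self]

lemma Delta_union (γ : Finset ℕ → ℝ) {a b : Finset ℕ} (h : Disjoint a b) (u : Finset ℕ) :
    Δ (a ∪ b) γ u = Δ a (fun x => Δ b γ x) u := by
  induction a using Finset.induction_on generalizing u with
  | empty => simp [Delta_empty]
  | @insert n a hna ih =>
    have hd : Disjoint a b := h.mono_left (Finset.subset_insert n a)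
    have hnb : n ∉ b := Finset.disjoint_left.mp h (Finset.mem_insert_self n a)
    have hnab : n ∉ a ∪ b := by simp [hna, hnb]
    have h1 : insert n a ∪ b = insert n (a ∪ b) := by
      ext x; simp [Finset.mem_insert, or_assoc]
    rw [h1, Delta_insert γ hnab, Delta_insert _ hna, ih hd, ih hd]

lemma Delta_decomp (γ : Finset ℕ → ℝ) (m : Finset ℕ) :
    ∀ u : Finset ℕ, γ u = ∑ w ∈ m.powerset, Δ (m \ w) γ (u ∪ w) := by
  induction m using Finset.induction_on with
  | empty => intro u; simp [Delta_empty]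
  | @insert n m hnm ih =>
    intro u
    rw [Finset.sum_powerset_insert hnm]
    have e1 : ∀ w ∈ m.powerset, Δ (insert n m \ w) γ (u ∪ w)
        = Δ (m \ w) γ (u ∪ w) - Δ (m \ w) γ ((u ∪ w) ∪ {n}) := by
      intro w hw
      rw [Finset.mem_powerset] at hw
      have hnw : n ∉ w := fun h => hnm (hw h)
      have h1 : insert n m \ w = insert n (m \ w) := by
        ext x
        by_cases hx : x = n
        · subst hx; simp [hnm, hnw]
        · simp [Finset.mem_insert, hx]
      have h2 : n ∉ m \ w := by simp [hnm]
      rw [h1, Delta_insert γ h2]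
    have e2 : ∀ w ∈ m.powerset, Δ (insert n m \ insert n w) γ (u ∪ insert n w)
        = Δ (m \ w) γ ((u ∪ w) ∪ {n}) := by
      intro w hw
      rw [Finset.mem_powerset] at hw
      have hnw : n ∉ w := fun h => hnm (hw h)
      have h1 : insert n m \ insert n w = m \ w := by
        ext x
        by_cases hx : x = n
        · subst hx; simp [hnm]
        · simp [Finset.mem_insert, hx]
      have h2 : u ∪ insert n w = (u ∪ w) ∪ {n} := by
        ext x; simp [Finset.mem_insert]
      rw [h1, h2]
    rw [Finset.sum_congr rfl e1, Finset.sum_congr rfl e2, Finset.sum_sub_distrib]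
    rw [sub_add_cancel]
    exact ih u

/-! ### Alternating sums -/

lemma neg_one_powerset_sum (a : Finset ℕ) :
    ∑ w ∈ a.powerset, (-1:ℝ)^w.card = if a = ∅ then 1 else 0 := by
  have h := Finset.sum_powerset_neg_one_pow_card (x := a)
  have h2 : ((∑ m ∈ a.powerset, (-1 : ℤ) ^ m.card : ℤ) : ℝ)
      = ∑ w ∈ a.powerset, (-1:ℝ)^w.card := by push_cast; rfl
  rw [← h2, h]
  split_ifs <;> simp

lemma alt_sum (v v' u : Finset ℕ) (c : ℝ) :
    ∑ w ∈ v.powerset, (-1:ℝ)^w.card * (if u ∪ w ⊆ v' then c else 0)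
      = if u ⊆ v' ∧ Disjoint v v' then c else 0 := by
  by_cases hu : u ⊆ v'
  · have h1 : ∀ w : Finset ℕ, (u ∪ w ⊆ v') ↔ (w ⊆ v') := by
      intro w; rw [Finset.union_subset_iff]; exact ⟨fun h => h.2, fun h => ⟨hu, h⟩⟩
    have h2 : ∀ w ∈ v.powerset, (-1:ℝ)^w.card * (if u ∪ w ⊆ v' then c else 0)
        = if w ⊆ v' then (-1:ℝ)^w.card * c else 0 := by
      intro w _; rw [if_congr (h1 w) rfl rfl, mul_ite, mul_zero]
    rw [Finset.sum_congr rfl h2, ← Finset.sum_filter]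
    have h3 : v.powerset.filter (· ⊆ v') = (v ∩ v').powerset := by
      ext w
      rw [Finset.mem_filter, Finset.mem_powerset, Finset.mem_powerset,
        Finset.subset_inter_iff]
    rw [h3, ← Finset.sum_mul, neg_one_powerset_sum]
    by_cases hd : Disjoint v v'
    · have hd' := Finset.disjoint_iff_inter_eq_empty.mp hd
      simp [hd, hd', hu]
    · have hd' : ¬ v ∩ v' = ∅ := fun h => hd (Finset.disjoint_iff_inter_eq_empty.mpr h)
      simp [hd, hd', hu]
  · have h1 : ∀ w : Finset ℕ, ¬ (u ∪ w ⊆ v') := fun w h =>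
      hu (Finset.subset_union_left.trans h)
    simp [h1, hu]

/-! ### tsum lemmas -/

lemma summable_ind {f : Finset ℕ → ℝ} (hf0 : ∀ v', 0 ≤ f v') (hs : Summable f)
    (p : Finset ℕ → Prop) [DecidablePred p] :
    Summable fun v' => if p v' then f v' else 0 := by
  apply Summable.of_nonneg_of_le _ _ hs
  · intro v'; split_ifs; exacts [hf0 v', le_refl 0]
  · intro v'; split_ifs; exacts [le_refl _, hf0 v']

lemma Tup_formula {f : Finset ℕ → ℝ} (hf0 : ∀ v', 0 ≤ f v') (hs : Summable f)
    (v u : Finset ℕ) :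
    Δ v (fun x => ∑' v' : Finset ℕ, if x ⊆ v' then f v' else 0) u
      = ∑' v' : Finset ℕ, if u ⊆ v' ∧ Disjoint v v' then f v' else 0 := by
  unfold Δ
  have h1 : ∀ w ∈ v.powerset,
      (-1:ℝ)^w.card * ∑' v' : Finset ℕ, (if u ∪ w ⊆ v' then f v' else 0)
      = ∑' v' : Finset ℕ, (-1:ℝ)^w.card * (if u ∪ w ⊆ v' then f v' else 0) := fun w _ =>
    (tsum_mul_left).symm
  rw [Finset.sum_congr rfl h1,
    ← Summable.tsum_finsetSum (fun w _ => (summable_ind hf0 hs _).mul_left _)]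
  exact tsum_congr fun v' => alt_sum v v' u (f v')

lemma tendsto_sdiff_tsum {f : Finset ℕ → ℝ} (hf0 : ∀ v', 0 ≤ f v') (hs : Summable f)
    (u t : Finset ℕ) :
    Tendsto (fun s : ℕ => ∑' v' : Finset ℕ,
        if u ⊆ v' ∧ Disjoint (range s \ t) v' then f v' else 0) atTop
      (nhds (∑' v' : Finset ℕ, if u ⊆ v' ∧ v' ⊆ t then f v' else 0)) := by
  apply tendsto_tsum_of_dominated_convergence hs
  · intro v'
    obtain ⟨n, hn⟩ := v'.exists_nat_subset_range
    apply Tendsto.congr' _ tendsto_const_nhds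
    filter_upwards [eventually_ge_atTop n] with s hs'
    have hvs : v' ⊆ range s := hn.trans (Finset.range_subset_range.mpr hs')
    by_cases hvt : v' ⊆ t
    · have hd : Disjoint (range s \ t) v' := Finset.disjoint_left.mpr fun x hx hxv =>
        (Finset.mem_sdiff.mp hx).2 (hvt hxv)
      simp [hvt, hd]
    · obtain ⟨x, hxv, hxt⟩ := Finset.not_subset.mp hvt
      have hd : ¬ Disjoint (range s \ t) v' := fun h =>
        (Finset.disjoint_left.mp h (Finset.mem_sdiff.mpr ⟨hvs hxv, hxt⟩)) hxv
      simp [hvt, hd]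
  · apply Filter.Eventually.of_forall
    intro s v'
    rw [Real.norm_eq_abs]
    split_ifs with h
    · rw [abs_of_nonneg (hf0 v')]
    · simpa using hf0 v'

lemma tendsto_range_ind_tsum {f : Finset ℕ → ℝ} (hf0 : ∀ v', 0 ≤ f v') (hs : Summable f)
    (u : Finset ℕ) :
    Tendsto (fun r : ℕ => ∑' v' : Finset ℕ, if u ⊆ v' ∧ v' ⊆ range r then f v' else 0)
      atTop (nhds (∑' v' : Finset ℕ, if u ⊆ v' then f v' else 0)) := by
  apply tendsto_tsum_of_dominated_convergence hs
  · intro v'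
    obtain ⟨n, hn⟩ := v'.exists_nat_subset_range
    apply Tendsto.congr' _ tendsto_const_nhds
    filter_upwards [eventually_ge_atTop n] with r hr
    have hvr : v' ⊆ range r := hn.trans (Finset.range_subset_range.mpr hr)
    simp [hvr]
  · apply Filter.Eventually.of_forall
    intro r v'
    rw [Real.norm_eq_abs]
    split_ifs with h
    · rw [abs_of_nonneg (hf0 v')]
    · simpa using hf0 v'

lemma tsum_subset_single {f : Finset ℕ → ℝ} (u : Finset ℕ) :
    ∑' v' : Finset ℕ, (if u ⊆ v' ∧ v' ⊆ u then f v' else 0) = f u := by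
  have h : ∀ v' : Finset ℕ, (if u ⊆ v' ∧ v' ⊆ u then f v' else 0)
      = if v' = u then f u else 0 := by
    intro v'
    by_cases hvu : v' = u
    · subst hvu; simp
    · have h2 : ¬ (u ⊆ v' ∧ v' ⊆ u) := fun hh => hvu (Finset.Subset.antisymm hh.2 hh.1)
      simp [hvu, h2]
  rw [tsum_congr h, tsum_ite_eq]

/-! ### Completely monotone side -/

lemma Delta_range_antitone {γ : Finset ℕ → ℝ} (hγ : CM γ) (u : Finset ℕ) :
    Antitone (fun s : ℕ => Δ (range s \ u) γ u) := by
  apply antitone_nat_of_succ_le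
  intro s
  by_cases hsu : s ∈ u
  · have h : range (s+1) \ u = range s \ u := by
      rw [Finset.range_add_one]
      ext x
      by_cases hx : x = s
      · subst hx; simp [hsu]
      · simp [Finset.mem_insert, hx]
    simp only [h, le_refl]
  · have h : range (s+1) \ u = insert s (range s \ u) := by
      rw [Finset.range_add_one]
      ext x
      by_cases hx : x = s
      · subst hx; simp [hsu]
      · simp [Finset.mem_insert, hx]
    have hs' : s ∉ range s \ u := by simp
    simp only [h, Delta_insert γ hs']
    have := hγ (range s \ u) (u ∪ {s})
    linarith

lemma key_bound {γ : Finset ℕ → ℝ} {L : Finset ℕ → ℝ}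
    (hL : ∀ (x : Finset ℕ) (s : ℕ), L x ≤ Δ (range s \ x) γ x) (u : Finset ℕ) (r : ℕ) :
    ∑ w ∈ (range r \ u).powerset, L (u ∪ w) ≤ γ u := by
  rw [Delta_decomp γ (range r \ u) u]
  apply Finset.sum_le_sum
  intro w hw
  rw [Finset.mem_powerset] at hw
  have h1 : (range r \ u) \ w = range r \ (u ∪ w) := by
    ext x; simp only [Finset.mem_sdiff, Finset.mem_union, not_or]; tauto
  rw [h1]; exact hL (u ∪ w) r

lemma summable_L {γ L : Finset ℕ → ℝ} (hL0 : ∀ x, 0 ≤ L x)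
    (hLle : ∀ (x : Finset ℕ) (s : ℕ), L x ≤ Δ (range s \ x) γ x) :
    Summable L := by
  apply summable_of_sum_le hL0
  intro A
  set r := (A.sup fun v => v.sup id) + 1 with hr
  have hAr : ∀ v ∈ A, v ⊆ range r := by
    intro v hv x hx
    rw [Finset.mem_range]
    have h1 : x ≤ v.sup id := Finset.le_sup (f := id) hx
    have h2 : v.sup id ≤ A.sup (fun v => v.sup id) := Finset.le_sup hv
    omega
  calc ∑ v ∈ A, L v ≤ ∑ v ∈ (range r).powerset, L v :=
        Finset.sum_le_sum_of_subset_of_nonneg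
          (fun v hv => Finset.mem_powerset.mpr (hAr v hv)) (fun v _ _ => hL0 v)
    _ ≤ γ ∅ := by
        have h := key_bound hLle ∅ r
        simpa using h

lemma union_sdiff_inj {r : ℕ} {u : Finset ℕ} : ∀ w₁ ∈ (range r \ u).powerset,
    ∀ w₂ ∈ (range r \ u).powerset, u ∪ w₁ = u ∪ w₂ → w₁ = w₂ := by
  intro w₁ h₁ w₂ h₂ he
  rw [Finset.mem_powerset] at h₁ h₂
  ext x
  constructor
  · intro hx
    have hxu : x ∉ u := (Finset.mem_sdiff.mp (h₁ hx)).2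
    have hx2 : x ∈ u ∪ w₂ := he ▸ Finset.mem_union_right u hx
    rcases Finset.mem_union.mp hx2 with h | h
    · exact absurd h hxu
    · exact h
  · intro hx
    have hxu : x ∉ u := (Finset.mem_sdiff.mp (h₂ hx)).2
    have hx2 : x ∈ u ∪ w₁ := he ▸ Finset.mem_union_right u hx
    rcases Finset.mem_union.mp hx2 with h | h
    · exact absurd h hxu
    · exact h

lemma filter_powerset_eq_image {r : ℕ} {u : Finset ℕ} :
    ((u ∪ range r).powerset).filter (u ⊆ ·)
      = Finset.image (fun w => u ∪ w) ((range r \ u).powerset) := by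
  ext v
  rw [Finset.mem_filter, Finset.mem_powerset, Finset.mem_image]
  constructor
  · rintro ⟨hvur, huv⟩
    refine ⟨v \ u, Finset.mem_powerset.mpr ?_, ?_⟩
    · intro x hx
      rw [Finset.mem_sdiff] at hx ⊢
      rcases Finset.mem_union.mp (hvur hx.1) with h | h
      · exact absurd h hx.2
      · exact ⟨h, hx.2⟩
    · ext x
      simp only [Finset.mem_union, Finset.mem_sdiff]
      constructor
      · rintro (h | ⟨h, _⟩)
        · exact huv h
        · exact h
      · intro h
        by_cases hxu : x ∈ u
        · exact Or.inl hxu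
        · exact Or.inr ⟨h, hxu⟩
  · rintro ⟨w, hw, rfl⟩
    rw [Finset.mem_powerset] at hw
    constructor
    · apply Finset.union_subset Finset.subset_union_left
      intro x hx
      exact Finset.mem_union_right u (Finset.mem_sdiff.mp (hw hx)).1
    · exact Finset.subset_union_left

lemma tsum_ind_le {γ L : Finset ℕ → ℝ} (hL0 : ∀ x, 0 ≤ L x)
    (hLle : ∀ (x : Finset ℕ) (s : ℕ), L x ≤ Δ (range s \ x) γ x) (u : Finset ℕ) :
    ∑' v : Finset ℕ, (if u ⊆ v then L v else 0) ≤ γ u := by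
  apply Summable.tsum_le_of_sum_le (summable_ind hL0 (summable_L hL0 hLle) _)
  intro A
  rw [← Finset.sum_filter]
  set r := ((insert u A).sup fun v => v.sup id) + 1 with hr
  have hAr : ∀ v ∈ insert u A, v ⊆ range r := by
    intro v hv x hx
    rw [Finset.mem_range]
    have h1 : x ≤ v.sup id := Finset.le_sup (f := id) hx
    have h2 : v.sup id ≤ (insert u A).sup (fun v => v.sup id) := Finset.le_sup hv
    omega
  have himg : A.filter (u ⊆ ·) ⊆ Finset.image (fun w => u ∪ w) ((range r \ u).powerset) := by
    intro v hv
    rw [Finset.mem_filter] at hv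
    rw [← filter_powerset_eq_image, Finset.mem_filter, Finset.mem_powerset]
    exact ⟨(hAr v (Finset.mem_insert_of_mem hv.1)).trans Finset.subset_union_right, hv.2⟩
  calc ∑ v ∈ A.filter (u ⊆ ·), L v
      ≤ ∑ v ∈ Finset.image (fun w => u ∪ w) ((range r \ u).powerset), L v :=
        Finset.sum_le_sum_of_subset_of_nonneg himg (fun v _ _ => hL0 v)
    _ = ∑ w ∈ (range r \ u).powerset, L (u ∪ w) := Finset.sum_image union_sdiff_inj
    _ ≤ γ u := key_bound hLle u r

lemma sum_G_tendsto {L : Finset ℕ → ℝ} (hL0 : ∀ x, 0 ≤ L x) (hsum : Summable L)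
    (u : Finset ℕ) :
    Tendsto (fun r : ℕ => ∑ w ∈ (range r \ u).powerset, L (u ∪ w)) atTop
      (nhds (∑' v : Finset ℕ, if u ⊆ v then L v else 0)) := by
  have hh : Tendsto (fun s : Finset (Finset ℕ) => ∑ v ∈ s, if u ⊆ v then L v else 0)
      atTop (nhds (∑' v : Finset ℕ, if u ⊆ v then L v else 0)) :=
    (summable_ind hL0 hsum _).hasSum
  have hmono : Monotone (fun r : ℕ => (u ∪ range r).powerset) := by
    intro r₁ r₂ h
    exact Finset.powerset_mono.mpr (Finset.union_subset_union_right (Finset.range_subset_range.mpr h))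
  have hexh : ∀ v : Finset ℕ, ∃ r : ℕ, v ∈ (u ∪ range r).powerset := by
    intro v
    obtain ⟨n, hn⟩ := v.exists_nat_subset_range
    exact ⟨n, Finset.mem_powerset.mpr (hn.trans Finset.subset_union_right)⟩
  have h2 := hh.comp (tendsto_atTop_finset_of_monotone hmono hexh)
  apply h2.congr
  intro r
  show ∑ v ∈ (u ∪ range r).powerset, (if u ⊆ v then L v else 0)
      = ∑ w ∈ (range r \ u).powerset, L (u ∪ w)
  rw [← Finset.sum_filter, filter_powerset_eq_image, Finset.sum_image union_sdiff_inj]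

lemma Delta_sdiff_range_eq (γ : Finset ℕ → ℝ) (u : Finset ℕ) (r s : ℕ)
    (hur : u ⊆ range r) (hrs : r ≤ s) :
    Δ (range s \ range r) γ u
      = ∑ w ∈ (range r \ u).powerset, Δ (range s \ (u ∪ w)) γ (u ∪ w) := by
  rw [Delta_decomp (fun x => Δ (range s \ range r) γ x) (range r \ u) u]
  apply Finset.sum_congr rfl
  intro w hw
  rw [Finset.mem_powerset] at hw
  have hdisj : Disjoint ((range r \ u) \ w) (range s \ range r) :=
    Finset.disjoint_left.mpr fun x hx hx2 =>
      (Finset.mem_sdiff.mp hx2).2 (Finset.mem_sdiff.mp ((Finset.mem_sdiff.mp hx).1)).1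
  rw [← Delta_union γ hdisj (u ∪ w)]
  congr 1
  ext x
  simp only [Finset.mem_union, Finset.mem_sdiff, Finset.mem_range, not_or]
  constructor
  · rintro (⟨⟨hxr, hxu⟩, hxw⟩ | ⟨hxs, hxr⟩)
    · exact ⟨lt_of_lt_of_le hxr hrs, hxu, hxw⟩
    · exact ⟨hxs, fun hxu => hxr (Finset.mem_range.mp (hur hxu)),
        fun hxw => hxr (Finset.mem_range.mp (Finset.mem_sdiff.mp (hw hxw)).1)⟩
  · rintro ⟨hxs, hxu, hxw⟩
    by_cases hxr : x < r
    · exact Or.inl ⟨⟨hxr, hxu⟩, hxw⟩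
    · exact Or.inr ⟨hxs, hxr⟩

lemma tendsto_to_G {γ L : Finset ℕ → ℝ}
    (hL : ∀ x : Finset ℕ, Tendsto (fun s : ℕ => Δ (range s \ x) γ x) atTop (nhds (L x)))
    (u : Finset ℕ) (r : ℕ) (hur : u ⊆ range r) :
    Tendsto (fun s : ℕ => Δ (range s \ range r) γ u) atTop
      (nhds (∑ w ∈ (range r \ u).powerset, L (u ∪ w))) := by
  have h1 : Tendsto (fun s : ℕ => ∑ w ∈ (range r \ u).powerset, Δ (range s \ (u ∪ w)) γ (u ∪ w))
      atTop (nhds (∑ w ∈ (range r \ u).powerset, L (u ∪ w))) :=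
    tendsto_finset_sum _ (fun w _ => hL (u ∪ w))
  apply h1.congr'
  filter_upwards [eventually_ge_atTop r] with s hs
  exact (Delta_sdiff_range_eq γ u r s hur hs).symm

lemma tendsto_zero_case (γ : Finset ℕ → ℝ) (u : Finset ℕ) (r : ℕ) (hur : ¬ u ⊆ range r) :
    Tendsto (fun s : ℕ => Δ (range s \ range r) γ u) atTop (nhds 0) := by
  obtain ⟨n, hnu, hnr⟩ := Finset.not_subset.mp hur
  apply Tendsto.congr' _ tendsto_const_nhds
  filter_upwards [eventually_ge_atTop (n+1)] with s hs
  have hn : n ∈ range s \ range r :=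
    Finset.mem_sdiff.mpr ⟨Finset.mem_range.mpr (by omega), hnr⟩
  exact (Delta_eq_zero γ hn hnu).symm

theorem stmt10 (C : ℝ) (hC : 0 < C)
    (Tup Td : (Finset ℕ → ℝ) → Finset ℕ → ℝ)
    (hTup : ∀ γ u, Tup γ u = ∑' v : Finset ℕ, if u ⊆ v then C ^ (2 * v.card) * γ v else 0)
    (hTd : ∀ γ, CM γ → ∀ u : Finset ℕ,
      Filter.Tendsto (fun s : ℕ => Δ (Finset.range s \ u) γ u) Filter.atTop
        (nhds (C ^ (2 * u.card) * Td γ u))) :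
    (∀ γ, SC C γ → Acond (Tup γ)) ∧
    (∀ γ, SC C γ → Td (Tup γ) = γ) ∧
    (∀ γ, Acond γ → SC C (Td γ) ∧ Tup (Td γ) = γ) ∧
    (∀ γ, CM γ → SC C (Td γ)) ∧
    (∀ γ, SC C γ → ∃ δ, CM δ ∧ Td δ = γ) ∧
    (∀ γ, CM γ → (∀ u, Tup (Td γ) u ≤ γ u) ∧ (Tup (Td γ) = γ ↔ Acond γ)) := by
  have hpow : ∀ u : Finset ℕ, (0:ℝ) < C ^ (2 * u.card) := fun u => pow_pos hC _
  -- facts for γ ∈ 𝒮_C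
  have part1 : ∀ γ, SC C γ → Acond (Tup γ) := by
    rintro γ ⟨hγ0, hγs⟩
    have hf0 : ∀ v : Finset ℕ, 0 ≤ C ^ (2 * v.card) * γ v :=
      fun v => mul_nonneg (hpow v).le (hγ0 v)
    have hTupeq : Tup γ = fun x => ∑' v' : Finset ℕ,
        if x ⊆ v' then C ^ (2 * v'.card) * γ v' else 0 := funext (hTup γ)
    constructor
    · intro v u
      rw [hTupeq, Tup_formula hf0 hγs]
      apply tsum_nonneg
      intro v'; split_ifs; exacts [hf0 v', le_refl 0]
    · intro u
      refine ⟨fun r => ∑' v' : Finset ℕ,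
        if u ⊆ v' ∧ v' ⊆ range r then C ^ (2 * v'.card) * γ v' else 0, fun r => ?_, ?_⟩
      · apply (tendsto_sdiff_tsum hf0 hγs u (range r)).congr
        intro s
        rw [hTupeq, Tup_formula hf0 hγs]
      · rw [hTup γ u]
        exact tendsto_range_ind_tsum hf0 hγs u
  have part2 : ∀ γ, SC C γ → Td (Tup γ) = γ := by
    intro γ hγ
    obtain ⟨hγ0, hγs⟩ := hγ
    have hf0 : ∀ v : Finset ℕ, 0 ≤ C ^ (2 * v.card) * γ v :=
      fun v => mul_nonneg (hpow v).le (hγ0 v)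
    have hTupeq : Tup γ = fun x => ∑' v' : Finset ℕ,
        if x ⊆ v' then C ^ (2 * v'.card) * γ v' else 0 := funext (hTup γ)
    funext u
    have h1 := hTd (Tup γ) (part1 γ ⟨hγ0, hγs⟩).1 u
    have h2 : Tendsto (fun s : ℕ => Δ (range s \ u) (Tup γ) u) atTop
        (nhds (C ^ (2 * u.card) * γ u)) := by
      have h3 := tendsto_sdiff_tsum hf0 hγs u u
      rw [tsum_subset_single u] at h3
      apply h3.congr
      intro s
      rw [hTupeq, Tup_formula hf0 hγs]
    have h4 := tendsto_nhds_unique h1 h2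
    exact mul_left_cancel₀ (hpow u).ne' h4
  -- main block for completely monotone γ
  have main : ∀ γ, CM γ →
      SC C (Td γ) ∧ (∀ u, Tup (Td γ) u ≤ γ u) ∧ (Tup (Td γ) = γ ↔ Acond γ) := by
    intro γ hγ
    set L : Finset ℕ → ℝ := fun x => C ^ (2 * x.card) * Td γ x with hLdef
    have hL : ∀ x : Finset ℕ, Tendsto (fun s : ℕ => Δ (range s \ x) γ x) atTop (nhds (L x)) :=
      hTd γ hγ
    have hL0 : ∀ x, 0 ≤ L x :=
      fun x => ge_of_tendsto (hL x) (Filter.Eventually.of_forall fun s => hγ _ _)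
    have hLle : ∀ (x : Finset ℕ) (s : ℕ), L x ≤ Δ (range s \ x) γ x :=
      fun x s => (Delta_range_antitone hγ x).le_of_tendsto (hL x) s
    have hLsum : Summable L := summable_L hL0 hLle
    have hTd0 : ∀ x, 0 ≤ Td γ x := by
      intro x
      have h : 0 ≤ C ^ (2 * x.card) * Td γ x := hL0 x
      by_contra hneg
      push_neg at hneg
      nlinarith [hpow x]
    have hSC : SC C (Td γ) := ⟨hTd0, hLsum⟩
    have hTupTd : Tup (Td γ) = fun x => ∑' v' : Finset ℕ,
        if x ⊆ v' then L v' else 0 := funext (hTup (Td γ))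
    have hle : ∀ u, Tup (Td γ) u ≤ γ u := by
      intro u
      rw [hTupTd]
      exact tsum_ind_le hL0 hLle u
    refine ⟨hSC, hle, ?_⟩
    set G : Finset ℕ → ℕ → ℝ :=
      fun u r => ∑ w ∈ (range r \ u).powerset, L (u ∪ w) with hGdef
    have hGlim : ∀ u, Tendsto (G u) atTop (nhds (Tup (Td γ) u)) := by
      intro u
      rw [hTupTd]
      exact sum_G_tendsto hL0 hLsum u
    have hGs : ∀ u r, u ⊆ range r →
        Tendsto (fun s : ℕ => Δ (range s \ range r) γ u) atTop (nhds (G u r)) :=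
      fun u r h => tendsto_to_G hL u r h
    constructor
    · intro heq
      refine ⟨hγ, fun u => ?_⟩
      refine ⟨fun r => if u ⊆ range r then G u r else 0, fun r => ?_, ?_⟩
      · by_cases h : u ⊆ range r
        · simpa [h] using hGs u r h
        · simpa [h] using tendsto_zero_case γ u r h
      · have h1 : Tendsto (G u) atTop (nhds (γ u)) := heq ▸ hGlim u
        apply h1.congr'
        obtain ⟨n, hn⟩ := u.exists_nat_subset_range
        filter_upwards [eventually_ge_atTop n] with r hr
        have h2 : u ⊆ range r := hn.trans (Finset.range_subset_range.mpr hr)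
        simp [h2]
    · rintro ⟨-, hA⟩
      funext u
      obtain ⟨g, hg1, hg2⟩ := hA u
      obtain ⟨n, hn⟩ := u.exists_nat_subset_range
      have hev : ∀ᶠ r in atTop, g r = G u r := by
        filter_upwards [eventually_ge_atTop n] with r hr
        exact tendsto_nhds_unique (hg1 r) (hGs u r (hn.trans (Finset.range_subset_range.mpr hr)))
      have h2 : Tendsto g atTop (nhds (Tup (Td γ) u)) :=
        Tendsto.congr' (hev.mono fun r h => h.symm) (hGlim u)
      exact tendsto_nhds_unique h2 hg2
  refine ⟨part1, part2, fun γ hA => ⟨(main γ hA.1).1, (main γ hA.1).2.2.mpr hA⟩,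
    fun γ h => (main γ h).1, fun γ h => ⟨Tup γ, (part1 γ h).1, part2 γ h⟩,
    fun γ h => ⟨(main γ h).2.1, (main γ h).2.2⟩⟩
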